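/- Let z₀ ∈ ℂ and let v₀, v₁, v₂ ∈ ℂ with v₁ ≠ 0. Then there exist a, b, c, d ∈ ℂ with ad − bc = 1 and cz₀ + d ≠ 0 such that the Möbius transformation M(w) = (aw+b)/(cw+d) satisfies M(z₀) = v₀, M'(z₀) = v₁, and M''(z₀) = v₂. Moreover M is unique as a function: any two Möbius transformations with these value, first-derivative and second-derivative data at z₀ agree on a neighborhood of z₀. In particular, every holomorphic φ with φ'(z₀) ≠ 0 has a unique osculating Möbius transformation M_{φ(z₀)}, the Möbius transformation with the same 2-jet as φ at z₀. -/

import Mathlib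

lemma hasDerivAt_moeb (a b c d w : ℂ) (hw : c * w + d ≠ 0) :
    HasDerivAt (fun w => (a * w + b) / (c * w + d)) ((a*d - b*c) / (c*w+d)^2) w := by
  have h1 : HasDerivAt (fun w : ℂ => a * w + b) a w := by
    simpa using ((hasDerivAt_id w).const_mul a).add_const b
  have h2 : HasDerivAt (fun w : ℂ => c * w + d) c w := by
    simpa using ((hasDerivAt_id w).const_mul c).add_const d
  have := h1.fun_div h2 hw
  exact this.congr_deriv (by ring)

lemma moeb_deriv_eventually (a b c d z : ℂ) (hz : c * z + d ≠ 0) :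
    deriv (fun w => (a * w + b) / (c * w + d)) =ᶠ[nhds z]
      (fun w => (a*d - b*c) / (c*w+d)^2) := by
  have hopen : IsOpen {w : ℂ | c * w + d ≠ 0} :=
    isOpen_ne.preimage (by continuity)
  filter_upwards [hopen.mem_nhds hz] with w hw
  exact (hasDerivAt_moeb a b c d w hw).deriv

lemma moeb_deriv (a b c d z : ℂ) (hz : c * z + d ≠ 0) :
    deriv (fun w => (a * w + b) / (c * w + d)) z = (a*d - b*c) / (c*z+d)^2 :=
  (hasDerivAt_moeb a b c d z hz).deriv

lemma moeb_deriv2 (a b c d z : ℂ) (hz : c * z + d ≠ 0) :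
    deriv (deriv (fun w => (a * w + b) / (c * w + d))) z
      = -2 * c * (a*d - b*c) / (c*z+d)^3 := by
  rw [(moeb_deriv_eventually a b c d z hz).deriv_eq]
  have h2 : HasDerivAt (fun w : ℂ => c * w + d) c z := by
    simpa using ((hasDerivAt_id z).const_mul c).add_const d
  have hsq : HasDerivAt (fun w : ℂ => (c*w+d)^2) (2*(c*z+d)*c) z := by
    simpa [mul_comm] using h2.fun_pow 2
  have : HasDerivAt (fun w : ℂ => (a*d-b*c)/(c*w+d)^2)
      ((0 * (c*z+d)^2 - (a*d-b*c) * (2*(c*z+d)*c)) / ((c*z+d)^2)^2) z :=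
    (hasDerivAt_const z (a*d-b*c)).div hsq (pow_ne_zero 2 hz)
  rw [this.deriv]
  field_simp
  ring

theorem osculating_moebius_exists_unique (z₀ v₀ v₁ v₂ : ℂ) (hv₁ : v₁ ≠ 0) :
    (∃ a b c d : ℂ, a * d - b * c = 1 ∧ c * z₀ + d ≠ 0 ∧
      (fun w => (a * w + b) / (c * w + d)) z₀ = v₀ ∧
      deriv (fun w => (a * w + b) / (c * w + d)) z₀ = v₁ ∧
      deriv (deriv (fun w => (a * w + b) / (c * w + d))) z₀ = v₂) ∧
    (∀ a b c d a' b' c' d' : ℂ,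
      a * d - b * c = 1 → c * z₀ + d ≠ 0 →
      a' * d' - b' * c' = 1 → c' * z₀ + d' ≠ 0 →
      (fun w => (a * w + b) / (c * w + d)) z₀ = v₀ →
      deriv (fun w => (a * w + b) / (c * w + d)) z₀ = v₁ →
      deriv (deriv (fun w => (a * w + b) / (c * w + d))) z₀ = v₂ →
      (fun w => (a' * w + b') / (c' * w + d')) z₀ = v₀ →
      deriv (fun w => (a' * w + b') / (c' * w + d')) z₀ = v₁ →
      deriv (deriv (fun w => (a' * w + b') / (c' * w + d'))) z₀ = v₂ →
      ∀ᶠ w in nhds z₀,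
        (a * w + b) / (c * w + d) = (a' * w + b') / (c' * w + d')) := by
  constructor
  · -- existence
    set q : ℂ := (v₁⁻¹) ^ ((2:ℕ)⁻¹ : ℂ) with hqdef
    have hq2 : q ^ 2 = v₁⁻¹ := by
      simpa [hqdef] using Complex.cpow_nat_inv_pow v₁⁻¹ (two_ne_zero)
    have hq : q ≠ 0 := by
      intro h
      rw [h] at hq2
      simp at hq2
      exact hv₁ hq2.symm
    set c : ℂ := -v₂ * q ^ 3 / 2 with hc
    set d : ℂ := q - c * z₀ with hd
    set a : ℂ := (1 + c * v₀ * q) / q with ha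
    set b : ℂ := v₀ * q - a * z₀ with hb
    have hden : c * z₀ + d = q := by rw [hd]; ring
    have haq : a * q = 1 + c * v₀ * q := by
      rw [ha]; field_simp
    have hdet : a * d - b * c = 1 := by
      have : a * d - b * c = a * q - c * (v₀ * q) := by rw [hd, hb]; ring
      rw [this, haq]; ring
    refine ⟨a, b, c, d, hdet, ?_, ?_, ?_, ?_⟩
    · rw [hden]; exact hq
    · simp only
      rw [hden, hb]
      field_simp
      ring
    · rw [moeb_deriv a b c d z₀ (by rw [hden]; exact hq)]
      rw [hdet, hden, one_div, hq2, inv_inv]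
    · rw [moeb_deriv2 a b c d z₀ (by rw [hden]; exact hq)]
      rw [hdet, hden, hc]
      field_simp
  · -- uniqueness
    intro a b c d a' b' c' d' hdet hden hdet' hden' h0 h1 h2 h0' h1' h2'
    simp only at h0 h0'
    rw [moeb_deriv a b c d z₀ hden, hdet] at h1
    rw [moeb_deriv a' b' c' d' z₀ hden', hdet'] at h1'
    rw [moeb_deriv2 a b c d z₀ hden, hdet] at h2
    rw [moeb_deriv2 a' b' c' d' z₀ hden', hdet'] at h2'
    set q : ℂ := c * z₀ + d with hqd
    set q' : ℂ := c' * z₀ + d' with hqd'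
    have hqsq : q ^ 2 = q' ^ 2 := by
      have h := h1.trans h1'.symm
      rw [div_eq_div_iff (pow_ne_zero 2 hden) (pow_ne_zero 2 hden')] at h
      linear_combination -h
    have hcc : c * q' ^ 3 = c' * q ^ 3 := by
      have h := h2.trans h2'.symm
      rw [div_eq_div_iff (pow_ne_zero 3 hden) (pow_ne_zero 3 hden')] at h
      linear_combination (-1/2 : ℂ) * h
    have hval : v₀ * q = a * z₀ + b := by
      rw [div_eq_iff hden] at h0; exact h0.symm
    have hval' : v₀ * q' = a' * z₀ + b' := by
      rw [div_eq_iff hden'] at h0'; exact h0'.symm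
    have hdetq : a * q - c * (a * z₀ + b) = 1 := by
      rw [hqd]; linear_combination hdet
    have hdetq' : a' * q' - c' * (a' * z₀ + b') = 1 := by
      rw [hqd']; linear_combination hdet'
    have hcases : q' = q ∨ q' = -q := by
      have : (q' - q) * (q' + q) = 0 := by linear_combination -hqsq
      rcases mul_eq_zero.mp this with h | h
      · left; linear_combination h
      · right; linear_combination h
    rcases hcases with h | h
    · -- q' = q : same coefficients
      have hc' : c' = c := by
        have h3 : c * q ^ 3 = c' * q ^ 3 := by rw [h] at hcc; exact hcc
        exact (mul_right_cancel₀ (pow_ne_zero 3 hden) h3.symm)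
      have hd' : d' = d := by
        have h3 : c' * z₀ + d' = c * z₀ + d := hqd'.symm.trans (h.trans hqd)
        rw [hc'] at h3
        exact add_left_cancel h3
      have e1 : a' * z₀ + b' = a * z₀ + b := by
        rw [← hval, ← hval', h]
      have ha' : a' = a := by
        rw [h, hc', e1] at hdetq'
        have e3 : (a' - a) * q = 0 := by linear_combination hdetq' - hdetq
        rcases mul_eq_zero.mp e3 with h4 | h4
        · linear_combination h4
        · exact absurd h4 hden
      have hb' : b' = b := by linear_combination e1 - z₀ * ha'
      exact Filter.Eventually.of_forall fun w => by rw [ha', hb', hc', hd']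
    · -- q' = -q : negated coefficients
      have hc' : c' = -c := by
        have h3 : c * (-q) ^ 3 = c' * q ^ 3 := by rw [h] at hcc; exact hcc
        have h4 : (-c) * q ^ 3 = c' * q ^ 3 := by linear_combination h3
        exact (mul_right_cancel₀ (pow_ne_zero 3 hden) h4).symm
      have hd' : d' = -d := by
        have h3 : c' * z₀ + d' = -(c * z₀ + d) := by
          rw [← hqd', ← hqd]; exact h
        rw [hc'] at h3
        linear_combination h3
      have e1 : a' * z₀ + b' = -(a * z₀ + b) := by
        linear_combination -hval' - hval + v₀ * h
      have ha' : a' = -a := by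
        rw [h, hc'] at hdetq'
        have e3 : (a' + a) * q = 0 := by
          linear_combination -hdetq' + hdetq + c * e1
        rcases mul_eq_zero.mp e3 with h4 | h4
        · linear_combination h4
        · exact absurd h4 hden
      have hb' : b' = -b := by linear_combination e1 - z₀ * ha'
      refine Filter.Eventually.of_forall fun w => ?_
      rw [ha', hb', hc', hd',
        show -a * w + -b = -(a * w + b) by ring,
        show -c * w + -d = -(c * w + d) by ring, neg_div_neg_eq]
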